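/- An allotment A for the strict-LBDD problem (capacities must be respected, total capacity equals total demand) is optimal if and only if its allotment subspace multigraph Γ(A) contains no simple directed cycle of negative total cost, where edges transferring dummy (slack) capacity have cost zero. -/

import Mathlib

/-- Load of service center `s` under allotment `A`. -/
def load {D S : Type*} [Fintype D] [DecidableEq S] (A : D → S) (s : S) : ℕ :=
  (Finset.univ.filter fun x => A x = s).card

/-- `A` is a feasible allotment: no service center exceeds its capacity. -/
def Feasible {D S : Type*} [Fintype D] [Fintype S] [DecidableEq S]
    (c : S → ℕ) (A : D → S) : Prop :=
  ∀ s : S, load A s ≤ c s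

/-- Γ(A) contains a simple directed cycle of negative total cost: distinct service
centers `s i`, with the demand unit `d i` (currently assigned to `s i`) transferred
from `s i` to `s (i+1)`, the total transfer cost being negative. -/
def HasNegSimpleCycle {D S : Type*} (CM : D → S → ℤ) (A : D → S) : Prop :=
  ∃ (m : ℕ) (s : Fin m → S) (d : Fin m → D), 0 < m ∧
    Function.Injective s ∧ (∀ i, A (d i) = s i) ∧
    (∑ i : Fin m, (CM (d i) (s (finRotate m i)) - CM (d i) (s i))) < 0

section LBDDHelpers

set_option linter.unusedSectionVars false

variable {D S : Type*} [Fintype D] [Fintype S] [DecidableEq D] [DecidableEq S]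

/-- Reroute: change targets of the demand units `e k` to `u k`. -/
noncomputable def reroute (A : D → S) {m : ℕ} (e : Fin m → D) (u : Fin m → S) : D → S :=
  fun x => if h : ∃ k, e k = x then u h.choose else A x

lemma reroute_apply_mem (A : D → S) {m : ℕ} {e : Fin m → D} (he : Function.Injective e)
    (u : Fin m → S) (k : Fin m) : reroute A e u (e k) = u k := by
  have h : ∃ j, e j = e k := ⟨k, rfl⟩
  have : h.choose = k := he h.choose_spec
  simp [reroute, dif_pos h, this]

lemma reroute_apply_not_mem (A : D → S) {m : ℕ} {e : Fin m → D}
    (u : Fin m → S) {x : D} (hx : ∀ k, e k ≠ x) : reroute A e u x = A x := by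
  have h : ¬ ∃ k, e k = x := by push_neg; exact hx
  simp [reroute, dif_neg h]

lemma sum_reroute {M : Type*} [AddCommMonoid M] (A : D → S) {m : ℕ}
    {e : Fin m → D} (he : Function.Injective e) (u : Fin m → S) (f : D → S → M) :
    (∑ x : D, f x (reroute A e u x)) + ∑ k, f (e k) (A (e k))
      = (∑ x : D, f x (A x)) + ∑ k, f (e k) (u k) := by
  classical
  set E := Finset.univ.image e with hE
  have hsplit : ∀ g : D → M, ∑ x : D, g x = (∑ x ∈ E, g x) + ∑ x ∈ Eᶜ, g x :=
    fun g => (Finset.sum_add_sum_compl E g).symm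
  have himg : ∀ g : D → M, ∑ x ∈ E, g x = ∑ k, g (e k) := by
    intro g
    rw [hE, Finset.sum_image]
    intro a _ b _ hab
    exact he hab
  have hnot : ∀ x ∈ Eᶜ, ∀ k, e k ≠ x := by
    intro x hx k hk
    rw [Finset.mem_compl] at hx
    exact hx (hk ▸ Finset.mem_image_of_mem e (Finset.mem_univ k))
  have hcompl : ∑ x ∈ Eᶜ, f x (reroute A e u x) = ∑ x ∈ Eᶜ, f x (A x) :=
    Finset.sum_congr rfl fun x hx => by rw [reroute_apply_not_mem A u (hnot x hx)]
  rw [hsplit (fun x => f x (reroute A e u x)), hsplit (fun x => f x (A x)),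
    himg (fun x => f x (reroute A e u x)), himg (fun x => f x (A x)), hcompl]
  have h1 : ∀ k, f (e k) (reroute A e u (e k)) = f (e k) (u k) := fun k => by
    rw [reroute_apply_mem A he u k]
  rw [Finset.sum_congr rfl fun k _ => h1 k]
  abel

lemma load_reroute (A : D → S) {m : ℕ} {e : Fin m → D} (he : Function.Injective e)
    (π : Equiv.Perm (Fin m)) (s0 : S) :
    load (reroute A e (fun k => A (e (π k)))) s0 = load A s0 := by
  classical
  have h := sum_reroute (M := ℕ) A he (fun k => A (e (π k)))
    (fun _ s' => if s' = s0 then 1 else 0)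
  have hperm : (∑ k, if A (e (π k)) = s0 then 1 else 0)
      = ∑ k, if A (e k) = s0 then (1:ℕ) else 0 :=
    Equiv.sum_comp π (fun k => if A (e k) = s0 then 1 else 0)
  simp only [hperm] at h
  have hl : ∀ C : D → S, load C s0 = ∑ x : D, if C x = s0 then 1 else 0 := by
    intro C; rw [load, Finset.card_filter]
  rw [hl, hl]
  omega

lemma cost_reroute (CM : D → S → ℤ) (A : D → S) {m : ℕ} {e : Fin m → D}
    (he : Function.Injective e) (u : Fin m → S) :
    ∑ x : D, CM x (reroute A e u x)
      = (∑ x : D, CM x (A x)) + ∑ k, (CM (e k) (u k) - CM (e k) (A (e k))) := by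
  have h := sum_reroute (M := ℤ) A he u CM
  rw [Finset.sum_sub_distrib]
  linarith

lemma load_eq_of_tight (c : S → ℕ) (htight : ∑ s : S, c s = Fintype.card D)
    (A : D → S) (hA : Feasible c A) (s : S) : load A s = c s := by
  classical
  have hsum : ∑ s : S, load A s = Fintype.card D := by
    rw [← Finset.card_univ]
    exact (Finset.card_eq_sum_card_fiberwise (f := A) (s := Finset.univ)
      (t := Finset.univ) (fun x _ => Finset.mem_univ _)).symm
  by_contra h
  have hlt : load A s < c s := lt_of_le_of_ne (hA s) h
  have : ∑ s : S, load A s < ∑ s : S, c s :=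
    Finset.sum_lt_sum (fun i _ => hA i) ⟨s, Finset.mem_univ s, hlt⟩
  omega

lemma exists_step (c : S → ℕ) (A B : D → S)
    (hlA : ∀ s, load A s = c s) (hlB : ∀ s, load B s = c s)
    {x : D} (hx : A x ≠ B x) : ∃ y, A y ≠ B y ∧ A y = B x := by
  classical
  set s := B x with hs
  have hcard : load A s = load B s := by rw [hlA, hlB]
  have h1 : ((Finset.univ.filter fun y => A y = s).filter fun y => B y = s).card
      + ((Finset.univ.filter fun y => A y = s).filter fun y => ¬ B y = s).card
      = load A s := Finset.card_filter_add_card_filter_not _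
  have h2 : ((Finset.univ.filter fun y => B y = s).filter fun y => A y = s).card
      + ((Finset.univ.filter fun y => B y = s).filter fun y => ¬ A y = s).card
      = load B s := Finset.card_filter_add_card_filter_not _
  have hcomm : ((Finset.univ.filter fun y => A y = s).filter fun y => B y = s)
      = ((Finset.univ.filter fun y => B y = s).filter fun y => A y = s) := by
    simp only [Finset.filter_filter]
    exact Finset.filter_congr fun y _ => by tauto
  have hxmem : x ∈ (Finset.univ.filter fun y => B y = s).filter fun y => ¬ A y = s := by
    simp [hs.symm ▸ hx]
    exact ⟨hs.symm, hx⟩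
  have hpos : 0 < ((Finset.univ.filter fun y => B y = s).filter fun y => ¬ A y = s).card :=
    Finset.card_pos.2 ⟨x, hxmem⟩
  have : 0 < ((Finset.univ.filter fun y => A y = s).filter fun y => ¬ B y = s).card := by
    rw [hcomm] at h1; omega
  obtain ⟨y, hy⟩ := Finset.card_pos.1 this
  simp only [Finset.mem_filter, Finset.mem_univ, true_and] at hy
  exact ⟨y, fun hh => hy.2 (hh ▸ hy.1), hy.1⟩

lemma finRotate_val {m : ℕ} (hm : 0 < m) (k : Fin m) :
    ((finRotate m k : Fin m) : ℕ) = if k.val + 1 = m then 0 else k.val + 1 := by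
  obtain ⟨n, rfl⟩ : ∃ n, m = n + 1 := ⟨m - 1, by omega⟩
  rw [finRotate_succ_apply, Fin.val_add_one]
  rcases eq_or_ne k (Fin.last n) with h | h
  · simp [h]
  · have h2 : k.val ≠ n := fun hh => h (Fin.ext hh)
    have h3 : ¬ (k.val + 1 = n + 1) := by omega
    simp [h, h3, h2]

lemma extract_cycle (A B : D → S)
    (hstep : ∀ x : D, A x ≠ B x → ∃ y, A y ≠ B y ∧ A y = B x)
    {x0 : D} (hx0 : A x0 ≠ B x0) :
    ∃ (m : ℕ) (t : Fin m → S) (e : Fin m → D), 0 < m ∧ Function.Injective t ∧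
      (∀ k, A (e k) = t k) ∧ (∀ k, B (e k) = t (finRotate m k)) ∧
      (∀ k, A (e k) ≠ B (e k)) := by
  classical
  set T := {x : D // A x ≠ B x} with hT
  let step : T → T := fun x => ⟨(hstep x.1 x.2).choose, (hstep x.1 x.2).choose_spec.1⟩
  let dseq : ℕ → T := fun n => step^[n] ⟨x0, hx0⟩
  let sv : ℕ → S := fun n => A (dseq n).1
  have hseq : ∀ n, sv (n + 1) = B (dseq n).1 := by
    intro n
    show A (dseq (n+1)).1 = B (dseq n).1
    have : dseq (n+1) = step (dseq n) := Function.iterate_succ_apply' step n _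
    rw [this]
    exact (hstep (dseq n).1 (dseq n).2).choose_spec.2
  obtain ⟨a, b, hab, hfab⟩ := Fintype.exists_ne_map_eq_of_card_lt
    (fun a : Fin (Fintype.card S + 1) => sv a.val) (by simp)
  have hP : ∃ j, ∃ i, i < j ∧ sv i = sv j := by
    rcases lt_or_gt_of_ne hab with h | h
    · exact ⟨b.val, a.val, h, hfab⟩
    · exact ⟨a.val, b.val, h, hfab.symm⟩
  set j := Nat.find hP with hj
  obtain ⟨i, hij, hsv⟩ := Nat.find_spec hP
  have hmin : ∀ j', j' < j → ¬ ∃ i', i' < j' ∧ sv i' = sv j' := fun j' h => Nat.find_min hP h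
  set m := j - i with hmdef
  have hm : 0 < m := by omega
  refine ⟨m, fun k => sv (i + k.val), fun k => (dseq (i + k.val)).1, hm, ?_, ?_, ?_, ?_⟩
  · have aux : ∀ k l : Fin m, k.val < l.val → sv (i + k.val) ≠ sv (i + l.val) := by
      intro k l hlt heq
      have hl : i + l.val < j := by omega
      exact hmin (i + l.val) hl ⟨i + k.val, by omega, heq⟩
    intro k l h
    rcases Nat.lt_trichotomy k.val l.val with h1 | h1 | h1
    · exact absurd h (aux _ _ h1)
    · exact Fin.ext h1
    · exact absurd h.symm (aux _ _ h1)
  · intro k; rfl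
  · intro k
    have hv := finRotate_val hm k
    show B (dseq (i + k.val)).1 = sv (i + (finRotate m k).val)
    by_cases hk : k.val + 1 = m
    · rw [if_pos hk] at hv
      rw [hv]
      have h1 : j = (i + k.val) + 1 := by omega
      have h2 : sv (i + 0) = sv ((i + k.val) + 1) := by rw [← h1]; exact hsv
      rw [h2, hseq]
    · rw [if_neg hk] at hv
      rw [hv, ← hseq]
      congr 1
  · intro k
    exact (dseq (i + k.val)).2

end LBDDHelpers

theorem strictLBDD_optimal_iff_no_neg_simple_cycle {D S : Type*}
    [Fintype D] [Fintype S] [DecidableEq D] [DecidableEq S]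
    (CM : D → S → ℤ) (c : S → ℕ) (htight : ∑ s : S, c s = Fintype.card D)
    (A : D → S) (hA : Feasible c A) :
    (∀ B : D → S, Feasible c B → (∑ x : D, CM x (A x)) ≤ ∑ x : D, CM x (B x))
      ↔ ¬ HasNegSimpleCycle CM A := by
  classical
  constructor
  · -- optimal → no negative simple cycle
    rintro hopt ⟨m, s, d, hm, hsinj, hAd, hneg⟩
    have hd : Function.Injective d := fun a b h => hsinj (by rw [← hAd, ← hAd, h])
    set B := reroute A d (fun i => s (finRotate m i)) with hBdef
    have hfun : (fun i => s (finRotate m i)) = fun i => A (d (finRotate m i)) :=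
      funext fun i => (hAd _).symm
    have hBfeas : Feasible c B := by
      intro s0
      have := load_reroute A hd (finRotate m) s0
      rw [hBdef, hfun]
      exact this.trans_le (hA s0)
    have hcost : ∑ x : D, CM x (B x)
        = (∑ x : D, CM x (A x))
          + ∑ i, (CM (d i) (s (finRotate m i)) - CM (d i) (s i)) := by
      rw [hBdef, cost_reroute CM A hd]
      congr 1
      exact Finset.sum_congr rfl fun i _ => by rw [hAd i]
    have := hopt B hBfeas
    linarith
  · -- no negative simple cycle → optimal
    intro hnc
    have key : ∀ n (B : D → S), Feasible c B →
        (Finset.univ.filter fun x => ¬ A x = B x).card = n →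
        ∑ x : D, CM x (A x) ≤ ∑ x : D, CM x (B x) := by
      intro n
      induction n using Nat.strong_induction_on with
      | _ n ih =>
        intro B hB hcard
        rcases Nat.eq_zero_or_pos n with h0 | hpos
        · have hempty : (Finset.univ.filter fun x => ¬ A x = B x) = ∅ :=
            Finset.card_eq_zero.1 (hcard.trans h0)
          have hAB : ∀ x, A x = B x := by
            intro x
            by_contra hx
            have : x ∈ (Finset.univ.filter fun x => ¬ A x = B x) := by
              simp [hx]
            rw [hempty] at this
            exact absurd this (Finset.notMem_empty x)
          exact le_of_eq (Finset.sum_congr rfl fun x _ => by rw [hAB x])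
        · have hne0 : (Finset.univ.filter fun x => ¬ A x = B x).Nonempty :=
            Finset.card_pos.1 (hcard ▸ hpos)
          obtain ⟨x0, hx0mem⟩ := hne0
          have hx0 : A x0 ≠ B x0 := by
            simpa using (Finset.mem_filter.1 hx0mem).2
          have hlA := load_eq_of_tight c htight A hA
          have hlB := load_eq_of_tight c htight B hB
          obtain ⟨m, t, e, hm, htinj, hAe, hBe, hneAB⟩ :=
            extract_cycle A B (fun x hx => exists_step c A B hlA hlB hx) hx0
          have he : Function.Injective e := fun a b h => htinj (by rw [← hAe, ← hAe, h])
          have hge : 0 ≤ ∑ k, (CM (e k) (t (finRotate m k)) - CM (e k) (t k)) := by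
            by_contra hlt
            push_neg at hlt
            exact hnc ⟨m, t, e, hm, htinj, hAe, hlt⟩
          set B' := reroute B e t with hB'def
          have hload : ∀ s0, load B' s0 = load B s0 := by
            intro s0
            have hfun : (fun k => B (e ((finRotate m).symm k))) = t := by
              funext k
              rw [hBe, Equiv.apply_symm_apply]
            have := load_reroute B he (finRotate m).symm s0
            rw [hfun] at this
            exact this
          have hB'feas : Feasible c B' := fun s0 => (hload s0) ▸ hB s0
          have hcost : ∑ x : D, CM x (B' x) ≤ ∑ x : D, CM x (B x) := by
            rw [hB'def, cost_reroute CM B he t]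
            have h1 : ∀ k : Fin m, CM (e k) (t k) - CM (e k) (B (e k))
                = -(CM (e k) (t (finRotate m k)) - CM (e k) (t k)) := by
              intro k; rw [hBe k]; ring
            rw [Finset.sum_congr rfl fun k _ => h1 k, Finset.sum_neg_distrib]
            linarith
          have hsub : (Finset.univ.filter fun x => ¬ A x = B' x)
              ⊆ (Finset.univ.filter fun x => ¬ A x = B x).erase (e ⟨0, hm⟩) := by
            intro x hx
            simp only [Finset.mem_filter, Finset.mem_univ, true_and] at hx
            have hxe : ∀ k, e k ≠ x := by
              intro k hk
              apply hx
              rw [← hk, hB'def, reroute_apply_mem B he t k]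
              exact hAe k
            have hBx : B' x = B x := reroute_apply_not_mem B t hxe
            rw [Finset.mem_erase]
            refine ⟨fun h => hxe _ h.symm, ?_⟩
            simp only [Finset.mem_filter, Finset.mem_univ, true_and]
            rw [← hBx]
            exact hx
          have hk0mem : e ⟨0, hm⟩ ∈ (Finset.univ.filter fun x => ¬ A x = B x) := by
            simp [hneAB ⟨0, hm⟩]
          have hltn : (Finset.univ.filter fun x => ¬ A x = B' x).card < n := by
            have h1 := Finset.card_le_card hsub
            rw [Finset.card_erase_of_mem hk0mem, hcard] at h1
            omega
          have := ih _ hltn B' hB'feas rfl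
          linarith
    intro B hB
    exact key _ B hB rfl
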